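/- Let m_0 ≥ 2 be even and let β = Σ_{k=1}^{m_0/2} 2^{-(2k-1)} (i.e., binary expansion 0.101010...10 with m_0 digits). Then Σ_{u=1, u odd}^{m_0 − 1} ‖2^u β‖ = m_0/6 + (4/9)(2^{-m_0} − 1), where ‖x‖ denotes the distance from x to the nearest integer. -/

import Mathlib

noncomputable section

/-- Distance from `x` to the nearest integer. -/
def nint (x : ℝ) : ℝ := |x - round x|

lemma geom4 (M : ℕ) : ∑ j ∈ Finset.Icc 1 M, (4:ℝ)^j = (4^(M+1) - 4)/3 := by
  induction M with
  | zero => simp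
  | succ n ih =>
    rw [Finset.sum_Icc_succ_top (by omega), ih]
    ring

lemma beta_closed (M : ℕ) :
    ∑ k ∈ Finset.Icc 1 M, (1:ℝ)/2^(2*k-1) = (2/3)*(1 - (1/4)^M) := by
  induction M with
  | zero => simp
  | succ n ih =>
    rw [Finset.sum_Icc_succ_top (by omega), ih]
    have h2 : (2:ℝ)^(2*(n+1)-1) = 2 * 4^n := by
      have h : 2*(n+1)-1 = 2*n+1 := by omega
      rw [h, pow_succ, pow_mul]; norm_num; ring
    rw [h2]
    have h4 : ((1:ℝ)/4)^n = 1/4^n := by rw [div_pow, one_pow]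
    have h5 : ((1:ℝ)/4)^(n+1) = 1/4^(n+1) := by rw [div_pow, one_pow]
    rw [h4, h5, pow_succ]
    have : (4:ℝ)^n ≠ 0 := by positivity
    field_simp
    ring

lemma term_val (M j : ℕ) (hj1 : 1 ≤ j) (hjM : j ≤ M) :
    nint (2^(2*j-1) * ((2/3)*(1 - ((1:ℝ)/4)^M))) = (1 - (4:ℝ)^j/4^M)/3 := by
  have h4M : (0:ℝ) < 4^M := by positivity
  have hle : (4:ℝ)^j ≤ 4^M := by
    apply pow_le_pow_right₀ (by norm_num) hjM
  have hdvd : (3:ℤ) ∣ 4^j - 1 := by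
    have := sub_dvd_pow_sub_pow (4:ℤ) 1 j
    simpa using this
  obtain ⟨n, hn⟩ := hdvd
  have hx : 2^(2*j-1) * ((2/3)*(1 - ((1:ℝ)/4)^M)) = (n:ℝ) + (1 - (4:ℝ)^j/4^M)/3 := by
    have h2 : (2:ℝ)^(2*j-1) = 4^j/2 := by
      have h : 2*j-1+1 = 2*j := by omega
      have := pow_succ (2:ℝ) (2*j-1)
      rw [h, pow_mul] at this
      norm_num at this
      field_simp
      linarith [this]
    have hn' : (n:ℝ) = ((4:ℝ)^j - 1)/3 := by
      have : ((4:ℤ)^j - 1 : ℤ) = 3 * n := hn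
      have := congrArg (fun z : ℤ => (z:ℝ)) this
      push_cast at this
      linarith
    have h4 : ((1:ℝ)/4)^M = 1/4^M := by rw [div_pow, one_pow]
    rw [h2, hn', h4]
    field_simp
    ring
  set r : ℝ := (1 - (4:ℝ)^j/4^M)/3 with hr
  have hr0 : 0 ≤ r := by
    rw [hr]
    have : (4:ℝ)^j/4^M ≤ 1 := by rw [div_le_one h4M]; exact hle
    linarith
  have hr1 : r < 1/2 := by
    rw [hr]
    have : (0:ℝ) < (4:ℝ)^j/4^M := by positivity
    linarith
  unfold nint
  rw [hx]
  have hround : round ((n:ℝ) + r) = n := by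
    rw [round_intCast_add]
    have : round r = 0 := by
      rw [round_eq_zero_iff]
      constructor <;> simp <;> linarith
    omega
  rw [hround]
  push_cast
  rw [add_sub_cancel_left]
  exact abs_of_nonneg hr0

theorem stmt6 (m0 : ℕ) (h2 : 2 ≤ m0) (he : Even m0) (β : ℝ)
    (hβ : β = ∑ k ∈ Finset.Icc 1 (m0 / 2), (1 : ℝ) / 2 ^ (2 * k - 1)) :
    ∑ u ∈ (Finset.Icc 1 (m0 - 1)).filter (fun u => Odd u), nint (2 ^ u * β)
      = (m0 : ℝ) / 6 + (4 / 9) * (1 / 2 ^ m0 - 1) := by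
  obtain ⟨M, hM⟩ := he
  have hM2 : m0 = 2 * M := by omega
  have hM1 : 1 ≤ M := by omega
  have hdiv : m0 / 2 = M := by omega
  rw [hdiv, beta_closed] at hβ
  have himg : (Finset.Icc 1 (m0 - 1)).filter (fun u => Odd u)
      = (Finset.Icc 1 M).image (fun j => 2*j-1) := by
    ext u
    simp only [Finset.mem_filter, Finset.mem_image, Finset.mem_Icc, Nat.odd_iff]
    constructor
    · rintro ⟨⟨h1, h2'⟩, h3⟩
      exact ⟨(u+1)/2, by omega, by omega⟩
    · rintro ⟨j, ⟨hj1, hj2⟩, rfl⟩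
      refine ⟨⟨by omega, by omega⟩, by omega⟩
  rw [himg, Finset.sum_image (by intro a ha b hb h; simp only [Finset.coe_Icc, Set.mem_Icc] at ha hb h; omega)]
  have hterm : ∀ j ∈ Finset.Icc 1 M, nint (2^(2*j-1) * β) = (1 - (4:ℝ)^j/4^M)/3 := by
    intro j hj
    simp only [Finset.mem_Icc] at hj
    rw [hβ]
    exact term_val M j hj.1 hj.2
  rw [Finset.sum_congr rfl hterm]
  have hsum : ∑ j ∈ Finset.Icc 1 M, ((1:ℝ) - (4:ℝ)^j/4^M)/3
      = (M - ((4^(M+1) - 4)/3)/4^M)/3 := by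
    rw [← Finset.sum_div]
    congr 1
    rw [Finset.sum_sub_distrib, Finset.sum_const, Nat.card_Icc, ← Finset.sum_div, geom4]
    simp
  rw [hsum]
  have h2m : (2:ℝ)^m0 = 4^M := by
    rw [hM2, pow_mul]; norm_num
  rw [h2m, hM2]
  have h4M : (4:ℝ)^M ≠ 0 := by positivity
  field_simp
  push_cast
  ring
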